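/- arXiv:2112.01498 — 2 statements merged into one kernel-verified Lean document; each statement's English description precedes it below -/
import Mathlib

section
/- Average encoded Choi state for random U(1)-covariant codes (Appendix C.1): let k, m, α : ℕ and n = k + m; index the joint physical-plus-reference system by ((Fin k → Bool) × (Fin m → Bool)) × (Fin k → Bool). Let ψ : (Fin m → Bool) → ℂ satisfy ∑ f, ‖ψ f‖² = 1 and ψ f = 0 whenever wt f ≠ α, and let Ψ be the matrix with entries Ψ (((x₁,f₁),r₁), ((x₂,f₂),r₂)) = 2^{-k} * (if x₁ = r₁ then 1 else 0) * (if x₂ = r₂ then 1 else 0) * ψ f₁ * star (ψ f₂) (the maximally entangled state between the k input qubits and the reference, tensored with the ancilla state). Let G be the subgroup of Matrix.unitaryGroup ((Fin k → Bool) × (Fin m → Bool)) ℂ of all U commuting with Q := Matrix.diagonal (fun p => ((wt p.1 + wt p.2 : ℕ) : ℂ)), and let μ be a bi-invariant probability measure on G. Then ∫ U, (↑U ⊗ₖ (1 : Matrix (Fin k → Bool) (Fin k → Bool) ℂ)) * Ψ * ((↑U)ᴴ ⊗ₖ 1) ∂μ = Matrix.diagonal (fun q => if wt q.1.1 + wt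 q.1.2 = wt q.2 + α then (2^{-k} : ℂ) / (n.choose (wt q.1.1 + wt q.1.2)) else 0). -/
open Matrix Kronecker MeasureTheory

/-- Entrywise (Borel) measurable structure on complex matrices. -/
noncomputable instance matrixMeasurableSpace {m n : Type*} : MeasurableSpace (Matrix m n ℂ) :=
  inferInstanceAs (MeasurableSpace (m → n → ℂ))

/-- The Hamming weight of a basis state of `m` qubits. -/
def wt {m : ℕ} (f : Fin m → Bool) : ℕ := (Finset.univ.filter (fun i => f i = true)).card

/-- The total Hamming-weight (charge) operator on `k + m` qubits. -/
noncomputable def Qtot (k m : ℕ) :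
    Matrix ((Fin k → Bool) × (Fin m → Bool)) ((Fin k → Bool) × (Fin m → Bool)) ℂ :=
  Matrix.diagonal (fun p => ((wt p.1 + wt p.2 : ℕ) : ℂ))

/-- The subgroup of the unitary group on `k + m` qubits consisting of the unitaries commuting
with the total Hamming-weight operator, i.e. the charge-conserving unitaries. -/
noncomputable def u1SymmetricGroup (k m : ℕ) :
    Subgroup (Matrix.unitaryGroup ((Fin k → Bool) × (Fin m → Bool)) ℂ) where
  carrier := {U | (U : Matrix ((Fin k → Bool) × (Fin m → Bool))
      ((Fin k → Bool) × (Fin m → Bool)) ℂ) * Qtot k m = Qtot k m * (U : Matrix _ _ ℂ)}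
  one_mem' := by simp
  mul_mem' := by
    intro a b ha hb
    have hab : ((a * b : Matrix.unitaryGroup ((Fin k → Bool) × (Fin m → Bool)) ℂ) :
        Matrix ((Fin k → Bool) × (Fin m → Bool)) ((Fin k → Bool) × (Fin m → Bool)) ℂ) =
        (a : Matrix _ _ ℂ) * (b : Matrix _ _ ℂ) := rfl
    show ((a * b : Matrix.unitaryGroup ((Fin k → Bool) × (Fin m → Bool)) ℂ) :
        Matrix _ _ ℂ) * Qtot k m =
      Qtot k m * ((a * b : Matrix.unitaryGroup ((Fin k → Bool) × (Fin m → Bool)) ℂ) :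
        Matrix _ _ ℂ)
    rw [hab, mul_assoc, hb, ← mul_assoc, ha, mul_assoc]
  inv_mem' := by
    intro a ha
    set A : Matrix ((Fin k → Bool) × (Fin m → Bool)) ((Fin k → Bool) × (Fin m → Bool)) ℂ :=
      ((a : Matrix.unitaryGroup ((Fin k → Bool) × (Fin m → Bool)) ℂ) :
        Matrix ((Fin k → Bool) × (Fin m → Bool)) ((Fin k → Bool) × (Fin m → Bool)) ℂ) with hA
    set B : Matrix ((Fin k → Bool) × (Fin m → Bool)) ((Fin k → Bool) × (Fin m → Bool)) ℂ :=
      ((a⁻¹ : Matrix.unitaryGroup ((Fin k → Bool) × (Fin m → Bool)) ℂ) :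
        Matrix ((Fin k → Bool) × (Fin m → Bool)) ((Fin k → Bool) × (Fin m → Bool)) ℂ) with hB
    have h1 : B * A = 1 := by
      have := congrArg (fun x : Matrix.unitaryGroup ((Fin k → Bool) × (Fin m → Bool)) ℂ =>
        (x : Matrix ((Fin k → Bool) × (Fin m → Bool)) ((Fin k → Bool) × (Fin m → Bool)) ℂ))
        (inv_mul_cancel a)
      simpa [hA, hB] using this
    have h2 : A * B = 1 := by
      have := congrArg (fun x : Matrix.unitaryGroup ((Fin k → Bool) × (Fin m → Bool)) ℂ =>
        (x : Matrix ((Fin k → Bool) × (Fin m → Bool)) ((Fin k → Bool) × (Fin m → Bool)) ℂ))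
        (mul_inv_cancel a)
      simpa [hA, hB] using this
    have ha' : A * Qtot k m = Qtot k m * A := ha
    show B * Qtot k m = Qtot k m * B
    calc B * Qtot k m = B * Qtot k m * (A * B) := by rw [h2, mul_one]
      _ = B * (Qtot k m * A) * B := by simp only [mul_assoc]
      _ = B * (A * Qtot k m) * B := by rw [← ha']
      _ = (B * A) * (Qtot k m * B) := by simp only [mul_assoc]
      _ = Qtot k m * B := by rw [h1, one_mul]

section AvgChoiAux

open Finset

variable {k m : ℕ}

abbrev Qb (k m : ℕ) := (Fin k → Bool) × (Fin m → Bool)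
abbrev PR (k m : ℕ) := Qb k m × (Fin k → Bool)

/-- total weight of a joint index -/
def wq {k m : ℕ} (p : Qb k m) : ℕ := wt p.1 + wt p.2

lemma count_boolfun (ι : Type*) [Fintype ι] [DecidableEq ι] (v : ℕ) :
    (Finset.univ.filter
      (fun f : ι → Bool => (Finset.univ.filter (fun i => f i = true)).card = v)).card
      = (Fintype.card ι).choose v := by
  classical
  have h := Finset.card_powersetCard v (Finset.univ : Finset ι)
  rw [Finset.card_univ] at h
  rw [← h]
  refine Finset.card_bij' (fun f _ => Finset.univ.filter (fun i => f i = true))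
    (fun t _ => fun i => decide (i ∈ t)) ?_ ?_ ?_ ?_
  · intro f hf
    simp only [Finset.mem_filter, Finset.mem_univ, true_and] at hf
    simp [Finset.mem_powersetCard, hf]
  · intro t ht
    simp only [Finset.mem_powersetCard] at ht
    simp only [Finset.mem_filter, Finset.mem_univ, true_and]
    rw [← ht.2]
    congr 1
    ext i
    simp
  · intro f hf
    funext i
    simp
  · intro t ht
    ext i
    simp

lemma wt_sum_elim (k m : ℕ) (p : Qb k m) :
    (Finset.univ.filter (fun i : Fin k ⊕ Fin m => Sum.elim p.1 p.2 i = true)).card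
      = wt p.1 + wt p.2 := by
  rw [Finset.card_filter, Fintype.sum_sum_type, wt, wt, Finset.card_filter,
    Finset.card_filter]
  rfl

lemma card_sector (k m v : ℕ) :
    (Finset.univ.filter (fun p : Qb k m => wq p = v)).card = (k + m).choose v := by
  classical
  have h := count_boolfun (Fin k ⊕ Fin m) v
  rw [Fintype.card_sum, Fintype.card_fin, Fintype.card_fin] at h
  rw [← h]
  refine Finset.card_bij' (fun p _ => fun i => Sum.elim p.1 p.2 i)
    (fun f _ => (fun i => f (Sum.inl i), fun j => f (Sum.inr j))) ?_ ?_ ?_ ?_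
  · intro p hp
    simp only [Finset.mem_filter, Finset.mem_univ, true_and, wq] at hp ⊢
    rw [← (Finset.mem_filter.mp hp).2]
    exact wt_sum_elim k m p
  · intro f hf
    simp only [Finset.mem_filter, Finset.mem_univ, true_and, wq] at hf ⊢
    rw [← hf]
    have h2 := wt_sum_elim k m (fun i => f (Sum.inl i), fun j => f (Sum.inr j))
    rw [show (Sum.elim (fun i => f (Sum.inl i)) fun j => f (Sum.inr j)) = f from
      funext fun i => by cases i <;> rfl] at h2
    exact Finset.mem_filter.mpr ⟨Finset.mem_univ _, h2.symm⟩
  · intro p hp; simp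
  · intro f hf; funext i; cases i <;> simp

lemma wq_le (p : Qb k m) : wq p ≤ k + m := by
  have h1 : wt p.1 ≤ k := by
    have := Finset.card_filter_le (Finset.univ : Finset (Fin k)) (fun i => p.1 i = true)
    simpa [wt] using this
  have h2 : wt p.2 ≤ m := by
    have := Finset.card_filter_le (Finset.univ : Finset (Fin m)) (fun i => p.2 i = true)
    simpa [wt] using this
  exact Nat.add_le_add h1 h2

lemma unitary_entry_norm_le {n : Type*} [Fintype n] [DecidableEq n]
    (U : Matrix.unitaryGroup n ℂ) (i j : n) : ‖(U : Matrix n n ℂ) i j‖ ≤ 1 := by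
  have h : ((U : Matrix n n ℂ)ᴴ * (U : Matrix n n ℂ)) j j = 1 := by
    have hu : (U : Matrix n n ℂ)ᴴ * (U : Matrix n n ℂ) = 1 := by
      simpa [Matrix.star_eq_conjTranspose] using U.prop.1
    rw [hu]; simp
  rw [Matrix.mul_apply] at h
  have h2 : ∑ p, Complex.normSq ((U : Matrix n n ℂ) p j) = 1 := by
    have h1 := congrArg Complex.re h
    rw [Complex.re_sum] at h1
    rw [show (1:ℂ).re = (1:ℝ) from rfl] at h1
    rw [← h1]
    apply Finset.sum_congr rfl
    intro p _
    rw [Matrix.conjTranspose_apply]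
    rw [show star ((U : Matrix n n ℂ) p j) * (U : Matrix n n ℂ) p j
      = ((Complex.normSq ((U : Matrix n n ℂ) p j) : ℝ) : ℂ) from by
        simp [Complex.star_def, mul_comm, Complex.mul_conj]]
    simp
  have h3 : Complex.normSq ((U : Matrix n n ℂ) i j) ≤ 1 := by
    rw [← h2]
    exact Finset.single_le_sum
      (f := fun p => Complex.normSq ((U : Matrix n n ℂ) p j))
      (fun p _ => Complex.normSq_nonneg _) (Finset.mem_univ i)
  have h4 := Complex.normSq_eq_norm_sq ((U : Matrix n n ℂ) i j)
  nlinarith [norm_nonneg ((U : Matrix n n ℂ) i j)]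

lemma triple_mul_apply {ι : Type*} [Fintype ι] (A M B : Matrix ι ι ℂ) (a b : ι) :
    (A * M * B) a b = ∑ c, ∑ d, A a c * M c d * B d b := by
  rw [Matrix.mul_apply]
  rw [Finset.sum_comm]
  apply Finset.sum_congr rfl
  intro c _
  rw [Matrix.mul_apply, Finset.sum_mul]

/-- the underlying matrix of an element of the symmetric subgroup -/
noncomputable def cmat {k m : ℕ} (U : u1SymmetricGroup k m) : Matrix (Qb k m) (Qb k m) ℂ :=
  ((U : Matrix.unitaryGroup (Qb k m) ℂ) : Matrix (Qb k m) (Qb k m) ℂ)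

lemma cmat_mul (g U : u1SymmetricGroup k m) : cmat (g * U) = cmat g * cmat U := rfl

lemma cmat_block (U : u1SymmetricGroup k m) {p q : Qb k m} (h : wq p ≠ wq q) :
    cmat U p q = 0 := by
  have hc : cmat U * Qtot k m = Qtot k m * cmat U := U.prop
  have he := congrFun (congrFun hc p) q
  rw [Qtot] at he
  rw [show (cmat U * Matrix.diagonal fun p : Qb k m => ((wt p.1 + wt p.2 : ℕ) : ℂ)) p q
      = cmat U p q * ((wq q : ℕ) : ℂ) from Matrix.mul_diagonal _ _ _ _] at he
  rw [show (Matrix.diagonal (fun p : Qb k m => ((wt p.1 + wt p.2 : ℕ) : ℂ)) * cmat U) p q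
      = ((wq p : ℕ) : ℂ) * cmat U p q from Matrix.diagonal_mul _ _ _ _] at he
  have hne : ((wq q : ℕ) : ℂ) ≠ ((wq p : ℕ) : ℂ) := by
    exact_mod_cast fun hh => h (by exact_mod_cast hh.symm)
  have : cmat U p q * (((wq q : ℕ) : ℂ) - ((wq p : ℕ) : ℂ)) = 0 := by
    rw [mul_sub, he]; ring
  rcases mul_eq_zero.mp this with h0 | h0
  · exact h0
  · exact absurd (sub_eq_zero.mp h0) hne

lemma sector_orthonormal (U : u1SymmetricGroup k m) (v : ℕ) (q₁ q₂ : Qb k m) :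
    ∑ p ∈ Finset.univ.filter (fun p : Qb k m => wq p = v),
      cmat U p q₁ * star (cmat U p q₂)
      = if q₁ = q₂ ∧ wq q₁ = v then 1 else 0 := by
  classical
  by_cases h1 : wq q₁ = v
  · by_cases h2 : wq q₂ = v
    · have hu : (cmat U)ᴴ * cmat U = 1 := by
        simpa [cmat, Matrix.star_eq_conjTranspose] using
          (U : Matrix.unitaryGroup (Qb k m) ℂ).prop.1
      have he := congrFun (congrFun hu q₂) q₁
      rw [Matrix.mul_apply] at he
      have hfull : ∑ p, cmat U p q₁ * star (cmat U p q₂)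
          = if q₁ = q₂ then 1 else 0 := by
        rw [show (∑ p, cmat U p q₁ * star (cmat U p q₂))
            = ∑ p, (cmat U)ᴴ q₂ p * cmat U p q₁ from
          Finset.sum_congr rfl fun p _ => by
            rw [Matrix.conjTranspose_apply]; ring]
        rw [he, Matrix.one_apply]
        simp [eq_comm]
      rw [← Finset.sum_subset (Finset.subset_univ _) ?_] at hfull
      · rw [hfull]
        simp [h1]
      · intro p _ hp
        simp only [Finset.mem_filter, Finset.mem_univ, true_and] at hp
        rw [cmat_block U (fun hh => hp (hh.trans h1))]
        ring
    · rw [Finset.sum_eq_zero]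
      · have : ¬(q₁ = q₂ ∧ wq q₁ = v) := by
          rintro ⟨rfl, _⟩; exact h2 h1
        simp [this]
      · intro p hp
        simp only [Finset.mem_filter, Finset.mem_univ, true_and] at hp
        rw [cmat_block U (fun hh => h2 (hh ▸ hp))]
        simp
  · rw [Finset.sum_eq_zero]
    · simp [h1]
    · intro p hp
      simp only [Finset.mem_filter, Finset.mem_univ, true_and] at hp
      rw [cmat_block U (hp.trans_ne (Ne.symm h1) : wq p ≠ wq q₁)]
      simp

lemma measurable_cmat {k m : ℕ} :
    Measurable (cmat : u1SymmetricGroup k m → Matrix (Qb k m) (Qb k m) ℂ) :=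
  measurable_subtype_coe.comp measurable_subtype_coe

lemma measurable_cmat_entry {k m : ℕ} (i j : Qb k m) :
    Measurable (fun U : u1SymmetricGroup k m => cmat U i j) := by
  have h1 : Measurable (fun M : Matrix (Qb k m) (Qb k m) ℂ => M i j) :=
    (measurable_pi_apply j).comp (measurable_pi_apply i)
  exact h1.comp measurable_cmat

/-- collapsed entry formula for a Kronecker conjugation -/
lemma conj_entry {k m : ℕ} (A : Matrix (Qb k m) (Qb k m) ℂ)
    (M : Matrix (PR k m) (PR k m) ℂ) (a b : PR k m) :
    (((A ⊗ₖ (1 : Matrix (Fin k → Bool) (Fin k → Bool) ℂ)) * M * (Aᴴ ⊗ₖ 1) :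
        Matrix (PR k m) (PR k m) ℂ)) a b
      = ∑ q₁ : Qb k m, ∑ q₂ : Qb k m,
          A a.1 q₁ * star (A b.1 q₂) * M (q₁, a.2) (q₂, b.2) := by
  classical
  rw [triple_mul_apply]
  rw [Fintype.sum_prod_type]
  apply Finset.sum_congr rfl
  intro q₁ _
  rw [show (∑ s₁ : Fin k → Bool, ∑ d : PR k m,
      (A ⊗ₖ (1 : Matrix (Fin k → Bool) (Fin k → Bool) ℂ)) a (q₁, s₁) * M (q₁, s₁) d
        * (Aᴴ ⊗ₖ 1) d b)
      = ∑ s₁ : Fin k → Bool, if s₁ = a.2 then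
          (∑ d : PR k m, A a.1 q₁ * M (q₁, s₁) d * (Aᴴ ⊗ₖ 1) d b) else 0 from by
    apply Finset.sum_congr rfl
    intro s₁ _
    by_cases hs : s₁ = a.2
    · subst hs
      rw [if_pos rfl]
      apply Finset.sum_congr rfl
      intro d _
      rw [Matrix.kroneckerMap_apply, Matrix.one_apply_eq]
      ring
    · rw [if_neg hs]
      apply Finset.sum_eq_zero
      intro d _
      rw [Matrix.kroneckerMap_apply, Matrix.one_apply_ne (fun hh => hs hh.symm)]
      ring]
  rw [Finset.sum_ite_eq' Finset.univ a.2]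
  rw [if_pos (Finset.mem_univ _)]
  rw [Fintype.sum_prod_type]
  apply Finset.sum_congr rfl
  intro q₂ _
  rw [show (∑ s₂ : Fin k → Bool, A a.1 q₁ * M (q₁, a.2) (q₂, s₂) * (Aᴴ ⊗ₖ
        (1 : Matrix (Fin k → Bool) (Fin k → Bool) ℂ)) (q₂, s₂) b)
      = ∑ s₂ : Fin k → Bool, if s₂ = b.2 then
          A a.1 q₁ * star (A b.1 q₂) * M (q₁, a.2) (q₂, s₂) else 0 from by
    apply Finset.sum_congr rfl
    intro s₂ _
    by_cases hs : s₂ = b.2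
    · subst hs
      rw [if_pos rfl, Matrix.kroneckerMap_apply, Matrix.one_apply_eq,
        Matrix.conjTranspose_apply]
      ring
    · rw [if_neg hs, Matrix.kroneckerMap_apply, Matrix.one_apply_ne hs]
      ring]
  rw [Finset.sum_ite_eq' Finset.univ b.2]
  rw [if_pos (Finset.mem_univ _)]

/-- the twirled matrix -/
noncomputable def Fm {k m : ℕ} (Ψ : Matrix (PR k m) (PR k m) ℂ)
    (U : u1SymmetricGroup k m) : Matrix (PR k m) (PR k m) ℂ :=
  (cmat U ⊗ₖ (1 : Matrix (Fin k → Bool) (Fin k → Bool) ℂ)) * Ψ * ((cmat U)ᴴ ⊗ₖ 1)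

lemma Fm_apply {k m : ℕ} (Ψ : Matrix (PR k m) (PR k m) ℂ)
    (U : u1SymmetricGroup k m) (a b : PR k m) :
    Fm Ψ U a b = ∑ q₁ : Qb k m, ∑ q₂ : Qb k m,
      cmat U a.1 q₁ * star (cmat U b.1 q₂) * Ψ (q₁, a.2) (q₂, b.2) :=
  conj_entry (cmat U) Ψ a b

lemma measurable_Fm {k m : ℕ} (Ψ : Matrix (PR k m) (PR k m) ℂ) (a b : PR k m) :
    Measurable (fun U : u1SymmetricGroup k m => Fm Ψ U a b) := by
  simp only [Fm_apply]
  apply Finset.measurable_sum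
  intro q₁ _
  apply Finset.measurable_sum
  intro q₂ _
  exact ((measurable_cmat_entry a.1 q₁).mul
    (continuous_star.measurable.comp (measurable_cmat_entry b.1 q₂))).mul_const _

set_option synthInstance.maxHeartbeats 1000000 in
lemma integrable_Fm {k m : ℕ} (μ : Measure (u1SymmetricGroup k m))
    [IsProbabilityMeasure μ] (Ψ : Matrix (PR k m) (PR k m) ℂ) (a b : PR k m) :
    Integrable (fun U : u1SymmetricGroup k m => Fm Ψ U a b) μ := by
  apply Integrable.mono' (g := fun _ => ∑ q₁ : Qb k m, ∑ q₂ : Qb k m,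
    ‖Ψ (q₁, a.2) (q₂, b.2)‖) (integrable_const _)
    (measurable_Fm Ψ a b).aestronglyMeasurable
  apply Filter.Eventually.of_forall
  intro U
  rw [Fm_apply]
  refine le_trans (norm_sum_le _ _) (Finset.sum_le_sum fun q₁ _ =>
    le_trans (norm_sum_le _ _) (Finset.sum_le_sum fun q₂ _ => ?_))
  rw [norm_mul, norm_mul, norm_star]
  have h1 := unitary_entry_norm_le (U : Matrix.unitaryGroup (Qb k m) ℂ) a.1 q₁
  have h2 := unitary_entry_norm_le (U : Matrix.unitaryGroup (Qb k m) ℂ) b.1 q₂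
  have h3 : ‖cmat U a.1 q₁‖ * ‖cmat U b.1 q₂‖ ≤ 1 :=
    mul_le_one₀ h1 (norm_nonneg _) h2
  calc ‖cmat U a.1 q₁‖ * ‖cmat U b.1 q₂‖ * ‖Ψ (q₁, a.2) (q₂, b.2)‖
      ≤ 1 * ‖Ψ (q₁, a.2) (q₂, b.2)‖ := by
        apply mul_le_mul_of_nonneg_right h3 (norm_nonneg _)
    _ = ‖Ψ (q₁, a.2) (q₂, b.2)‖ := one_mul _

/-- a diagonal sign matrix is in the symmetric group -/
noncomputable def phaseU (k m : ℕ) (p₀ : Qb k m) : u1SymmetricGroup k m :=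
  ⟨⟨Matrix.diagonal (fun q => if q = p₀ then (-1 : ℂ) else 1), by
      rw [Matrix.mem_unitaryGroup_iff]
      rw [Matrix.star_eq_conjTranspose, Matrix.diagonal_conjTranspose,
        Matrix.diagonal_mul_diagonal]
      ext i j
      rw [Matrix.diagonal_apply, Matrix.one_apply]
      by_cases hij : i = j
      · subst hij
        by_cases h : i = p₀ <;> simp [h]
      · simp [hij]⟩, by
    show Matrix.diagonal _ * Qtot k m = Qtot k m * Matrix.diagonal _
    rw [Qtot, Matrix.diagonal_mul_diagonal, Matrix.diagonal_mul_diagonal]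
    ext i j
    rw [Matrix.diagonal_apply, Matrix.diagonal_apply]
    by_cases hij : i = j <;> simp [hij, mul_comm]⟩

lemma cmat_phaseU (k m : ℕ) (p₀ : Qb k m) :
    cmat (phaseU k m p₀) = Matrix.diagonal (fun q => if q = p₀ then (-1 : ℂ) else 1) := rfl

/-- a weight-preserving permutation matrix is in the symmetric group -/
noncomputable def permU (k m : ℕ) (σ : Equiv.Perm (Qb k m)) (hσ : ∀ q, wq (σ q) = wq q) :
    u1SymmetricGroup k m :=
  ⟨⟨Matrix.of (fun a b : Qb k m => if a = σ b then (1 : ℂ) else 0), by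
      rw [Matrix.mem_unitaryGroup_iff]
      ext a b
      rw [Matrix.mul_apply, Matrix.one_apply]
      rw [show (∑ c, Matrix.of (fun a b : Qb k m => if a = σ b then (1 : ℂ) else 0) a c *
          (star (Matrix.of (fun a b : Qb k m => if a = σ b then (1 : ℂ) else 0))) c b)
          = ∑ c, if c = σ.symm a then (if b = σ c then (1:ℂ) else 0) else 0 from by
        apply Finset.sum_congr rfl
        intro c _
        rw [Matrix.star_apply, Matrix.of_apply, Matrix.of_apply]
        by_cases hc : c = σ.symm a
        · subst hc
          rw [if_pos rfl, if_pos (σ.apply_symm_apply a).symm, one_mul]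
          by_cases hb : b = σ (σ.symm a) <;> simp [hb]
        · have : a ≠ σ c := fun hh => hc (by rw [hh, Equiv.symm_apply_apply])
          rw [if_neg hc, if_neg this, zero_mul]]
      rw [Finset.sum_ite_eq' Finset.univ (σ.symm a)]
      rw [if_pos (Finset.mem_univ _)]
      by_cases hab : a = b
      · subst hab
        rw [if_pos rfl, if_pos (σ.apply_symm_apply a).symm]
      · rw [if_neg hab, if_neg (fun hh : b = σ (σ.symm a) => hab (by
          rw [hh, σ.apply_symm_apply]))]⟩, by
    show Matrix.of _ * Qtot k m = Qtot k m * Matrix.of _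
    ext a b
    rw [Qtot, Matrix.mul_diagonal, Matrix.diagonal_mul]
    by_cases h : a = σ b
    · subst h
      have h0 := hσ b
      rw [wq, wq] at h0
      rw [h0]
      ring
    · simp [Matrix.of_apply, h]⟩

lemma cmat_permU (k m : ℕ) (σ : Equiv.Perm (Qb k m)) (hσ : ∀ q, wq (σ q) = wq q) :
    cmat (permU k m σ hσ) = Matrix.of (fun a b : Qb k m => if a = σ b then (1 : ℂ) else 0) :=
  rfl

lemma measurable_mul_left {k m : ℕ} (g : u1SymmetricGroup k m) :
    Measurable (fun U : u1SymmetricGroup k m => g * U) := by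
  have h1 : Measurable (fun U : u1SymmetricGroup k m => cmat g * cmat U) := by
    apply measurable_pi_lambda
    intro i
    apply measurable_pi_lambda
    intro j
    simp only [Matrix.mul_apply]
    exact Finset.measurable_sum _ (fun c _ => (measurable_cmat_entry c j).const_mul _)
  exact (h1.subtype_mk (h := fun U => (g.1 * U.1).prop)).subtype_mk
    (h := fun U => (g * U).prop)

lemma integral_cmul {X : Type*} [MeasurableSpace X] (μ : Measure X) (c : ℂ) (f : X → ℂ) :
    ∫ x, c * f x ∂μ = c * ∫ x, f x ∂μ := by
  simpa [smul_eq_mul] using integral_smul (𝕜 := ℂ) c f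

set_option synthInstance.maxHeartbeats 1000000 in
lemma I_invariance {k m : ℕ} (μ : Measure (u1SymmetricGroup k m))
    [IsProbabilityMeasure μ]
    (hleft : ∀ g : u1SymmetricGroup k m, μ.map (fun x => g * x) = μ)
    (Ψ : Matrix (PR k m) (PR k m) ℂ) (g : u1SymmetricGroup k m) (a b : PR k m) :
    ∫ U, Fm Ψ U a b ∂μ
      = ∑ q₁ : Qb k m, ∑ q₂ : Qb k m, cmat g a.1 q₁ * star (cmat g b.1 q₂) *
          ∫ U, Fm Ψ U (q₁, a.2) (q₂, b.2) ∂μ := by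
  have hms : AEStronglyMeasurable (fun V => Fm Ψ V a b)
      (μ.map (fun U : u1SymmetricGroup k m => g * U)) := by
    rw [hleft g]
    exact (measurable_Fm Ψ a b).aestronglyMeasurable
  have h0 : ∫ U, Fm Ψ U a b ∂μ = ∫ U, Fm Ψ (g * U) a b ∂μ := by
    conv_lhs => rw [← hleft g]
    exact integral_map (measurable_mul_left g).aemeasurable hms
  have h1 : ∀ U : u1SymmetricGroup k m, Fm Ψ (g * U) a b
      = ∑ q₁ : Qb k m, ∑ q₂ : Qb k m, cmat g a.1 q₁ * star (cmat g b.1 q₂) *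
          Fm Ψ U (q₁, a.2) (q₂, b.2) := by
    intro U
    have h2 : Fm Ψ (g * U)
        = (cmat g ⊗ₖ (1 : Matrix (Fin k → Bool) (Fin k → Bool) ℂ)) * Fm Ψ U *
          ((cmat g)ᴴ ⊗ₖ 1) := by
      rw [Fm, Fm, cmat_mul, Matrix.conjTranspose_mul]
      rw [show ((cmat g * cmat U) ⊗ₖ (1 : Matrix (Fin k → Bool) (Fin k → Bool) ℂ))
          = (cmat g ⊗ₖ 1) * (cmat U ⊗ₖ 1) from by
        rw [← Matrix.mul_kronecker_mul, one_mul]]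
      rw [show (((cmat U)ᴴ * (cmat g)ᴴ) ⊗ₖ (1 : Matrix (Fin k → Bool) (Fin k → Bool) ℂ))
          = ((cmat U)ᴴ ⊗ₖ 1) * ((cmat g)ᴴ ⊗ₖ 1) from by
        rw [← Matrix.mul_kronecker_mul, one_mul]]
      simp only [mul_assoc]
    rw [h2]
    exact conj_entry (cmat g) (Fm Ψ U) a b
  rw [h0]
  rw [show (fun U => Fm Ψ (g * U) a b) = fun U => ∑ q₁ : Qb k m, ∑ q₂ : Qb k m,
      cmat g a.1 q₁ * star (cmat g b.1 q₂) * Fm Ψ U (q₁, a.2) (q₂, b.2) from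
    funext h1]
  rw [integral_finset_sum _ (fun q₁ _ => integrable_finset_sum _ (fun q₂ _ =>
    ((integrable_Fm μ Ψ _ _).const_mul _)))]
  apply Finset.sum_congr rfl
  intro q₁ _
  rw [integral_finset_sum _ (fun q₂ _ => ((integrable_Fm μ Ψ _ _).const_mul _))]
  apply Finset.sum_congr rfl
  intro q₂ _
  exact integral_cmul μ _ _

lemma diag_double_collapse {ι : Type*} [Fintype ι] [DecidableEq ι] (d : ι → ℂ)
    (p₁ p₂ : ι) (f : ι → ι → ℂ) :
    (∑ q₁, ∑ q₂, Matrix.diagonal d p₁ q₁ * star (Matrix.diagonal d p₂ q₂) * f q₁ q₂)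
      = d p₁ * star (d p₂) * f p₁ p₂ := by
  classical
  simp only [Matrix.diagonal_apply]
  rw [show (∑ q₁, ∑ q₂, (if p₁ = q₁ then d p₁ else 0) *
      star (if p₂ = q₂ then d p₂ else 0) * f q₁ q₂)
      = ∑ q₁, if p₁ = q₁ then (∑ q₂, if p₂ = q₂ then d p₁ * star (d p₂) * f q₁ q₂ else 0)
          else 0 from by
    apply Finset.sum_congr rfl
    intro q₁ _
    by_cases h1 : p₁ = q₁
    · rw [if_pos h1, if_pos h1]
      apply Finset.sum_congr rfl
      intro q₂ _
      by_cases h2 : p₂ = q₂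
      · rw [if_pos h2, if_pos h2]
      · rw [if_neg h2, if_neg h2, star_zero]
        ring
    · rw [if_neg h1, if_neg h1]
      apply Finset.sum_eq_zero
      intro q₂ _
      ring]
  rw [Finset.sum_ite_eq Finset.univ p₁, if_pos (Finset.mem_univ _),
    Finset.sum_ite_eq Finset.univ p₂, if_pos (Finset.mem_univ _)]

lemma perm_double_collapse {ι : Type*} [Fintype ι] [DecidableEq ι] (σ : Equiv.Perm ι)
    (p₁ p₂ : ι) (f : ι → ι → ℂ) :
    (∑ q₁, ∑ q₂, (if p₁ = σ q₁ then (1:ℂ) else 0) *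
      star (if p₂ = σ q₂ then (1:ℂ) else 0) * f q₁ q₂)
      = f (σ.symm p₁) (σ.symm p₂) := by
  classical
  have hiff : ∀ (p q : ι), (p = σ q) = (q = σ.symm p) := fun p q =>
    propext ⟨fun h => by rw [h, Equiv.symm_apply_apply],
      fun h => by rw [h, Equiv.apply_symm_apply]⟩
  simp only [hiff]
  rw [show (∑ q₁, ∑ q₂, (if q₁ = σ.symm p₁ then (1:ℂ) else 0) *
      star (if q₂ = σ.symm p₂ then (1:ℂ) else 0) * f q₁ q₂)
      = ∑ q₁, if q₁ = σ.symm p₁ then (∑ q₂, if q₂ = σ.symm p₂ then f q₁ q₂ else 0)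
          else 0 from by
    apply Finset.sum_congr rfl
    intro q₁ _
    by_cases h1 : q₁ = σ.symm p₁
    · rw [if_pos h1, if_pos h1]
      apply Finset.sum_congr rfl
      intro q₂ _
      by_cases h2 : q₂ = σ.symm p₂
      · rw [if_pos h2, if_pos h2, star_one]
        ring
      · rw [if_neg h2, if_neg h2, star_zero]
        ring
    · rw [if_neg h1, if_neg h1]
      apply Finset.sum_eq_zero
      intro q₂ _
      ring]
  rw [Finset.sum_ite_eq' Finset.univ (σ.symm p₁), if_pos (Finset.mem_univ _),
    Finset.sum_ite_eq' Finset.univ (σ.symm p₂), if_pos (Finset.mem_univ _)]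

lemma Fm_sector_sum {k m : ℕ} (Ψ : Matrix (PR k m) (PR k m) ℂ)
    (U : u1SymmetricGroup k m) (v : ℕ) (r₁ r₂ : Fin k → Bool) :
    ∑ p ∈ Finset.univ.filter (fun p : Qb k m => wq p = v), Fm Ψ U (p, r₁) (p, r₂)
      = ∑ q ∈ Finset.univ.filter (fun q : Qb k m => wq q = v), Ψ (q, r₁) (q, r₂) := by
  classical
  simp only [Fm_apply]
  rw [Finset.sum_comm]
  rw [show (∑ q₁ : Qb k m, ∑ p ∈ Finset.univ.filter (fun p : Qb k m => wq p = v),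
      ∑ q₂ : Qb k m, cmat U (p, r₁).1 q₁ * star (cmat U (p, r₂).1 q₂) *
        Ψ (q₁, (p, r₁).2) (q₂, (p, r₂).2))
      = ∑ q₁ : Qb k m, ∑ q₂ : Qb k m,
          (∑ p ∈ Finset.univ.filter (fun p : Qb k m => wq p = v),
            cmat U p q₁ * star (cmat U p q₂)) * Ψ (q₁, r₁) (q₂, r₂) from by
    apply Finset.sum_congr rfl
    intro q₁ _
    rw [Finset.sum_comm]
    apply Finset.sum_congr rfl
    intro q₂ _
    rw [Finset.sum_mul]]
  rw [show (∑ q₁ : Qb k m, ∑ q₂ : Qb k m,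
      (∑ p ∈ Finset.univ.filter (fun p : Qb k m => wq p = v),
        cmat U p q₁ * star (cmat U p q₂)) * Ψ (q₁, r₁) (q₂, r₂))
      = ∑ q₁ : Qb k m, if wq q₁ = v then Ψ (q₁, r₁) (q₁, r₂) else 0 from by
    apply Finset.sum_congr rfl
    intro q₁ _
    rw [show (∑ q₂ : Qb k m,
        (∑ p ∈ Finset.univ.filter (fun p : Qb k m => wq p = v),
          cmat U p q₁ * star (cmat U p q₂)) * Ψ (q₁, r₁) (q₂, r₂))
        = ∑ q₂ : Qb k m, if q₂ = q₁ then (if wq q₁ = v then Ψ (q₁, r₁) (q₂, r₂) else 0)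
            else 0 from by
      apply Finset.sum_congr rfl
      intro q₂ _
      rw [sector_orthonormal U v q₁ q₂]
      by_cases h1 : q₁ = q₂
      · subst h1
        rw [if_pos rfl]
        by_cases h2 : wq q₁ = v
        · rw [if_pos ⟨rfl, h2⟩, if_pos h2, one_mul]
        · rw [if_neg (fun hh => h2 hh.2), if_neg h2, zero_mul]
      · rw [if_neg (fun hh => h1 hh.1), if_neg (fun hh => h1 hh.symm), zero_mul]]
    rw [Finset.sum_ite_eq' Finset.univ q₁, if_pos (Finset.mem_univ _)]]
  rw [Finset.sum_filter]

lemma psi_sector {k m : ℕ} (α : ℕ) (Ψ : Matrix (PR k m) (PR k m) ℂ)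
    (ψ : (Fin m → Bool) → ℂ)
    (hψnorm : ∑ f : Fin m → Bool, ‖ψ f‖ ^ 2 = (1 : ℝ))
    (hψ : ∀ f, wt f ≠ α → ψ f = 0)
    (hΨ : ∀ x₁ f₁ r₁ x₂ f₂ r₂, Ψ ((x₁, f₁), r₁) ((x₂, f₂), r₂) =
      (2 : ℂ) ^ (-(k : ℤ)) * (if x₁ = r₁ then 1 else 0) * (if x₂ = r₂ then 1 else 0) *
        ψ f₁ * star (ψ f₂))
    (v : ℕ) (r₁ r₂ : Fin k → Bool) :
    ∑ q ∈ Finset.univ.filter (fun q : Qb k m => wq q = v), Ψ (q, r₁) (q, r₂)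
      = if r₁ = r₂ ∧ v = wt r₁ + α then (2:ℂ)^(-(k:ℤ)) else 0 := by
  classical
  have hψsum : ∑ f : Fin m → Bool, ψ f * star (ψ f) = 1 := by
    have hterm : ∀ f, ψ f * star (ψ f) = ((‖ψ f‖^2 : ℝ) : ℂ) := fun f => by
      rw [Complex.star_def, Complex.mul_conj']
      push_cast
      ring
    rw [Finset.sum_congr rfl (fun f _ => hterm f), ← Complex.ofReal_sum, hψnorm,
      Complex.ofReal_one]
  rw [Finset.sum_filter, Fintype.sum_prod_type]
  by_cases hr : r₁ = r₂
  · subst hr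
    by_cases hv : v = wt r₁ + α
    · rw [if_pos ⟨rfl, hv⟩]
      have hterm : ∀ (x : Fin k → Bool) (f : Fin m → Bool),
          (if wq (x, f) = v then Ψ ((x, f), r₁) ((x, f), r₁) else 0)
            = if x = r₁ then (2:ℂ)^(-(k:ℤ)) * (ψ f * star (ψ f)) else 0 := by
        intro x f
        by_cases hx : x = r₁
        · subst hx
          rw [if_pos rfl]
          by_cases hf : wt f = α
          · rw [if_pos (show wq (x, f) = v from by simp [wq, hf, hv]), hΨ,
              if_pos rfl]
            ring
          · by_cases hc : wq (x, f) = v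
            · rw [if_pos hc, hΨ, hψ f hf]
              ring
            · rw [if_neg hc, hψ f hf]
              ring
        · by_cases hc : wq (x, f) = v
          · rw [if_pos hc, if_neg hx, hΨ, if_neg hx]
            ring
          · rw [if_neg hc, if_neg hx]
      rw [Finset.sum_congr rfl (fun x _ => Finset.sum_congr rfl (fun f _ => hterm x f))]
      rw [show (∑ x : Fin k → Bool, ∑ f : Fin m → Bool,
          if x = r₁ then (2:ℂ)^(-(k:ℤ)) * (ψ f * star (ψ f)) else 0)
          = ∑ x : Fin k → Bool, if x = r₁ then
              (∑ f : Fin m → Bool, (2:ℂ)^(-(k:ℤ)) * (ψ f * star (ψ f))) else 0 from by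
        apply Finset.sum_congr rfl
        intro x _
        by_cases hx : x = r₁ <;> simp [hx]]
      rw [Finset.sum_ite_eq' Finset.univ r₁, if_pos (Finset.mem_univ _)]
      rw [← Finset.mul_sum, hψsum, mul_one]
    · rw [if_neg (fun hh => hv hh.2)]
      apply Finset.sum_eq_zero
      intro x _
      apply Finset.sum_eq_zero
      intro f _
      by_cases hc : wq (x, f) = v
      · rw [if_pos hc, hΨ]
        by_cases hx : x = r₁
        · subst hx
          by_cases hf : wt f = α
          · exact absurd (show v = wt x + α from by rw [← hc]; simp [wq, hf]) hv
          · rw [hψ f hf]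
            ring
        · rw [if_neg hx]
          ring
      · rw [if_neg hc]
  · rw [if_neg (fun hh => hr hh.1)]
    apply Finset.sum_eq_zero
    intro x _
    apply Finset.sum_eq_zero
    intro f _
    by_cases hc : wq (x, f) = v
    · rw [if_pos hc, hΨ]
      by_cases hx1 : x = r₁
      · rw [if_neg (show ¬ x = r₂ from fun h2 => hr (hx1.symm.trans h2))]
        ring
      · rw [if_neg hx1]
        ring
    · rw [if_neg hc]

end AvgChoiAux

/-- **Average encoded Choi state for random U(1)-covariant codes** (Appendix C.1): twirling the
Choi state of the `(n,k;α)`-`U(1)` encoding (the maximally entangled state between the `k` logical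
qubits and a `k`-qubit reference, tensored with an ancilla of definite Hamming weight `α`) by a
bi-invariant probability measure on the charge-conserving unitaries yields the block-diagonal
state `2^{-k} ⊕_j Π_{j+α} / C(n, j+α) ⊗ Π_j^R` (entrywise Bochner integrals). -/
theorem avg_choi_state_u1 (k m α : ℕ)
    (μ : Measure (u1SymmetricGroup k m)) [IsProbabilityMeasure μ]
    (hleft : ∀ g : u1SymmetricGroup k m, μ.map (fun x => g * x) = μ)
    (hright : ∀ g : u1SymmetricGroup k m, μ.map (fun x => x * g) = μ)
    (ψ : (Fin m → Bool) → ℂ)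
    (hψnorm : ∑ f : Fin m → Bool, ‖ψ f‖ ^ 2 = (1 : ℝ))
    (hψ : ∀ f, wt f ≠ α → ψ f = 0)
    (Ψ : Matrix (((Fin k → Bool) × (Fin m → Bool)) × (Fin k → Bool))
      (((Fin k → Bool) × (Fin m → Bool)) × (Fin k → Bool)) ℂ)
    (hΨ : ∀ x₁ f₁ r₁ x₂ f₂ r₂, Ψ ((x₁, f₁), r₁) ((x₂, f₂), r₂) =
      (2 : ℂ) ^ (-(k : ℤ)) * (if x₁ = r₁ then 1 else 0) * (if x₂ = r₂ then 1 else 0) *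
        ψ f₁ * star (ψ f₂))
    (x y : ((Fin k → Bool) × (Fin m → Bool)) × (Fin k → Bool)) :
    ∫ U : u1SymmetricGroup k m,
        ((((U : Matrix.unitaryGroup ((Fin k → Bool) × (Fin m → Bool)) ℂ) :
            Matrix ((Fin k → Bool) × (Fin m → Bool)) ((Fin k → Bool) × (Fin m → Bool)) ℂ) ⊗ₖ
          (1 : Matrix (Fin k → Bool) (Fin k → Bool) ℂ)) * Ψ *
          ((((U : Matrix.unitaryGroup ((Fin k → Bool) × (Fin m → Bool)) ℂ) :
            Matrix ((Fin k → Bool) × (Fin m → Bool)) ((Fin k → Bool) × (Fin m → Bool)) ℂ))ᴴ ⊗ₖ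
          (1 : Matrix (Fin k → Bool) (Fin k → Bool) ℂ))) x y ∂μ =
      Matrix.diagonal (fun q : ((Fin k → Bool) × (Fin m → Bool)) × (Fin k → Bool) =>
        if wt q.1.1 + wt q.1.2 = wt q.2 + α then
          (2 : ℂ) ^ (-(k : ℤ)) / (((k + m).choose (wt q.1.1 + wt q.1.2) : ℕ) : ℂ)
        else 0) x y := by
    classical
  obtain ⟨p₁, r₁⟩ := x
  obtain ⟨p₂, r₂⟩ := y
  show (∫ U, Fm Ψ U (p₁, r₁) (p₂, r₂) ∂μ) = _
  by_cases hp : p₁ = p₂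
  · subst hp
    have hconst : ∀ p' : Qb k m, wq p' = wq p₁ →
        (∫ U, Fm Ψ U (p₁, r₁) (p₁, r₂) ∂μ) = ∫ U, Fm Ψ U (p', r₁) (p', r₂) ∂μ := by
      intro p' hw
      have hσ : ∀ q, wq (Equiv.swap p₁ p' q) = wq q := by
        intro q
        rcases eq_or_ne q p₁ with rfl | h1
        · rw [Equiv.swap_apply_left]
          exact hw
        · rcases eq_or_ne q p' with rfl | h2
          · rw [Equiv.swap_apply_right]
            exact hw.symm
          · rw [Equiv.swap_apply_of_ne_of_ne h1 h2]
      have h : (∫ U, Fm Ψ U (p₁, r₁) (p₁, r₂) ∂μ)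
          = ∑ q₁ : Qb k m, ∑ q₂ : Qb k m,
              (if p₁ = Equiv.swap p₁ p' q₁ then (1:ℂ) else 0) *
              star (if p₁ = Equiv.swap p₁ p' q₂ then (1:ℂ) else 0) *
              ∫ U, Fm Ψ U (q₁, r₁) (q₂, r₂) ∂μ :=
        I_invariance μ hleft Ψ (permU k m (Equiv.swap p₁ p') hσ) (p₁, r₁) (p₁, r₂)
      rw [perm_double_collapse] at h
      rw [Equiv.symm_swap, Equiv.swap_apply_left] at h
      exact h
    have hsum : ∑ p' ∈ Finset.univ.filter (fun p : Qb k m => wq p = wq p₁),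
        (∫ U, Fm Ψ U (p', r₁) (p', r₂) ∂μ)
        = if r₁ = r₂ ∧ wq p₁ = wt r₁ + α then (2:ℂ)^(-(k:ℤ)) else 0 := by
      rw [← integral_finset_sum _ (fun p' _ => integrable_Fm μ Ψ _ _)]
      rw [show (fun U => ∑ p' ∈ Finset.univ.filter (fun p : Qb k m => wq p = wq p₁),
          Fm Ψ U (p', r₁) (p', r₂))
          = fun _ : u1SymmetricGroup k m =>
              if r₁ = r₂ ∧ wq p₁ = wt r₁ + α then (2:ℂ)^(-(k:ℤ)) else 0 from
        funext fun U => by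
          rw [Fm_sector_sum Ψ U (wq p₁) r₁ r₂,
            psi_sector α Ψ ψ hψnorm hψ hΨ (wq p₁) r₁ r₂]]
      rw [integral_const]
      simp
    have hsum2 : ∑ p' ∈ Finset.univ.filter (fun p : Qb k m => wq p = wq p₁),
        (∫ U, Fm Ψ U (p', r₁) (p', r₂) ∂μ)
        = (((Finset.univ.filter (fun p : Qb k m => wq p = wq p₁)).card : ℕ) : ℂ) *
            ∫ U, Fm Ψ U (p₁, r₁) (p₁, r₂) ∂μ := by
      rw [Finset.sum_congr rfl (fun p' hp' => (hconst p'
        (by simpa using (Finset.mem_filter.mp hp').2)).symm)]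
      rw [Finset.sum_const, nsmul_eq_mul]
    have hcard : (((Finset.univ.filter (fun p : Qb k m => wq p = wq p₁)).card : ℕ) : ℂ)
        = (((k + m).choose (wq p₁) : ℕ) : ℂ) := by
      exact_mod_cast congrArg (fun n : ℕ => (n : ℂ)) (card_sector k m (wq p₁))
    have hchoose : (((k + m).choose (wq p₁) : ℕ) : ℂ) ≠ 0 := by
      have h0 := Nat.choose_pos (wq_le p₁)
      exact_mod_cast h0.ne'
    have hI : (∫ U, Fm Ψ U (p₁, r₁) (p₁, r₂) ∂μ)
        = (if r₁ = r₂ ∧ wq p₁ = wt r₁ + α then (2:ℂ)^(-(k:ℤ)) else 0) /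
            (((k + m).choose (wq p₁) : ℕ) : ℂ) := by
      rw [eq_div_iff hchoose]
      rw [← hsum, hsum2, hcard]
      ring
    rw [hI]
    by_cases hr : r₁ = r₂
    · subst hr
      rw [Matrix.diagonal_apply_eq]
      by_cases hw : wt p₁.1 + wt p₁.2 = wt r₁ + α
      · rw [if_pos hw, if_pos (show r₁ = r₁ ∧ wq p₁ = wt r₁ + α from ⟨rfl, hw⟩)]
        rfl
      · rw [if_neg hw, if_neg (show ¬(r₁ = r₁ ∧ wq p₁ = wt r₁ + α) from
          fun hh => hw hh.2)]
        exact zero_div _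
    · rw [Matrix.diagonal_apply_ne _ (fun hh => hr (congrArg Prod.snd hh))]
      rw [if_neg (fun hh => hr hh.1)]
      exact zero_div _
  · have h : (∫ U, Fm Ψ U (p₁, r₁) (p₂, r₂) ∂μ)
        = ∑ q₁ : Qb k m, ∑ q₂ : Qb k m,
            Matrix.diagonal (fun q => if q = p₁ then (-1:ℂ) else 1) p₁ q₁ *
            star (Matrix.diagonal (fun q => if q = p₁ then (-1:ℂ) else 1) p₂ q₂) *
            ∫ U, Fm Ψ U (q₁, r₁) (q₂, r₂) ∂μ :=
      I_invariance μ hleft Ψ (phaseU k m p₁) (p₁, r₁) (p₂, r₂)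
    rw [diag_double_collapse] at h
    rw [if_pos rfl, if_neg (fun hh => hp hh.symm), star_one] at h
    rw [Matrix.diagonal_apply_ne _ (fun hh => hp (congrArg (fun z => z.1) hh))]
    linear_combination h / 2
end

section
/- Exact symmetry-term computation for the SU(d) Choi error (proof of Theorem 10): let d ≥ 1 and n ≥ 1, and define ρ : Matrix (Fin d × Fin d) (Fin d × Fin d) ℂ by ρ (a,b) (c,e) = (1/(n*d) : ℂ) * (if a = b then 1 else 0) * (if c = e then 1 else 0) + (((n−1) : ℂ)/(n*d^2)) * (if (a,b) = (c,e) then 1 else 0); that is, ρ = (1/n)·|φ̂⟩⟨φ̂| + ((n−1)/n)·(I/d)⊗(I/d) with |φ̂⟩ = d^{-1/2} ∑_a |a⟩|a⟩ the maximally entangled state. Then ρ is positive semidefinite, and for any hρ : ρ.PosSemidef, the trace of its positive semidefinite square root satisfies (hρ.sqrt).trace = ((Real.sqrt ((d^2 + n − 1)/(n * d^2)) + (d^2 − 1) * Real.sqrt ((n − 1)/(n * d^2))) : ℂ). Consequently the fidelity of ρ with the maximally mixed state I/d² equals 1/d times this quantity. -/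
open Matrix
open scoped ComplexOrder

/-- The positive semidefinite square root of a positive semidefinite matrix, as defined in the
older Mathlib (removed since). -/
noncomputable def Matrix.PosSemidef.sqrt {n 𝕜 : Type*} [Fintype n] [RCLike 𝕜] [DecidableEq n]
    {A : Matrix n n 𝕜} (hA : A.PosSemidef) : Matrix n n 𝕜 :=
  hA.1.eigenvectorUnitary.1 * diagonal ((↑) ∘ (Real.sqrt ·) ∘ hA.1.eigenvalues) *
  (star hA.1.eigenvectorUnitary : Matrix n n 𝕜)

/-- **Exact symmetry-term computation for the SU(d) Choi error** (proof of Theorem 10): the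
two-qudit state `ρ = (1/n)·|φ̂⟩⟨φ̂| + ((n−1)/n)·(I/d)⊗(I/d)`, with `|φ̂⟩` the maximally entangled
state, is positive semidefinite, and the trace of its positive semidefinite square root equals
`√((d² + n − 1)/(n d²)) + (d² − 1)·√((n − 1)/(n d²))`; consequently the fidelity of `ρ` with the
maximally mixed state `I/d²` is `1/d` times this quantity. -/
theorem sud_symmetry_term_sqrt_trace (d n : ℕ) (hd : 1 ≤ d) (hn : 1 ≤ n)
    (ρ : Matrix (Fin d × Fin d) (Fin d × Fin d) ℂ)
    (hρdef : ∀ a b c e : Fin d, ρ (a, b) (c, e) =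
      (1 / ((n : ℂ) * (d : ℂ))) * (if a = b then 1 else 0) * (if c = e then 1 else 0) +
        (((n : ℂ) - 1) / ((n : ℂ) * (d : ℂ) ^ 2)) * (if (a, b) = (c, e) then 1 else 0)) :
    ρ.PosSemidef ∧ ∀ (hρ : ρ.PosSemidef),
      hρ.sqrt.trace =
        ((Real.sqrt (((d : ℝ) ^ 2 + (n : ℝ) - 1) / ((n : ℝ) * (d : ℝ) ^ 2)) +
          ((d : ℝ) ^ 2 - 1) * Real.sqrt (((n : ℝ) - 1) / ((n : ℝ) * (d : ℝ) ^ 2)) : ℝ) : ℂ) := by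
  have hd0 : (0:ℝ) < (d:ℝ) := by exact_mod_cast hd
  have hd1 : (1:ℝ) ≤ (d:ℝ) := by exact_mod_cast hd
  have hn0 : (1:ℝ) ≤ (n:ℝ) := by exact_mod_cast hn
  have hnR0 : (0:ℝ) < (n:ℝ) := by linarith
  have hnC : (n:ℂ) ≠ 0 := Nat.cast_ne_zero.mpr (by omega)
  have hdC : (d:ℂ) ≠ 0 := Nat.cast_ne_zero.mpr (by omega)
  have hden : (0:ℝ) < (n:ℝ) * (d:ℝ)^2 := by positivity
  set sR := Real.sqrt (((d:ℝ)^2 + (n:ℝ) - 1) / ((n:ℝ) * (d:ℝ)^2)) with hsdef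
  set tR := Real.sqrt (((n:ℝ) - 1) / ((n:ℝ) * (d:ℝ)^2)) with htdef
  have hargt : (0:ℝ) ≤ ((n:ℝ) - 1) / ((n:ℝ) * (d:ℝ)^2) := by
    apply div_nonneg _ hden.le; linarith
  have hargs : (0:ℝ) ≤ ((d:ℝ)^2 + (n:ℝ) - 1) / ((n:ℝ) * (d:ℝ)^2) := by
    apply div_nonneg _ hden.le; nlinarith
  have ht2 : tR^2 = ((n:ℝ) - 1) / ((n:ℝ) * (d:ℝ)^2) := Real.sq_sqrt hargt
  have hs2 : sR^2 = ((d:ℝ)^2 + (n:ℝ) - 1) / ((n:ℝ) * (d:ℝ)^2) := Real.sq_sqrt hargs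
  have ht0 : 0 ≤ tR := Real.sqrt_nonneg _
  have hts : tR ≤ sR := by
    apply Real.sqrt_le_sqrt
    gcongr
    nlinarith
  set v : (Fin d × Fin d) → ℂ := fun p => if p.1 = p.2 then 1 else 0 with hv
  set M : Matrix (Fin d × Fin d) (Fin d × Fin d) ℂ := vecMulVec v v with hMdef
  have hvstar : ∀ p, star (v p) = v p := by
    intro p; simp only [hv]; split <;> simp
  have hvsq : ∀ r, v r * v r = v r := by
    intro r; simp only [hv]; split <;> simp
  have hsumv : ∑ r : Fin d × Fin d, v r = (d:ℂ) := by
    rw [Fintype.sum_prod_type]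
    simp only [hv]
    rw [Finset.sum_congr rfl
      (fun a _ => Finset.sum_ite_eq Finset.univ a (fun _ => (1:ℂ)))]
    simp
  have hMM : M * M = (d:ℂ) • M := by
    ext p q
    simp only [mul_apply, hMdef, vecMulVec_apply, Matrix.smul_apply, smul_eq_mul]
    calc ∑ r, (v p * v r) * (v r * v q)
        = ∑ r, (v p * v q) * v r :=
          Finset.sum_congr rfl fun r _ => by
            linear_combination (v p * v q) * (hvsq r)
      _ = (v p * v q) * ∑ r, v r := by rw [Finset.mul_sum]
      _ = (d:ℂ) * (v p * v q) := by rw [hsumv]; ring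
  have hMherm : M.IsHermitian := by
    ext p q
    simp only [conjTranspose_apply, hMdef, vecMulVec_apply, star_mul', hvstar]
    ring
  have hMpsd : M.PosSemidef := by
    refine posSemidef_iff_dotProduct_mulVec.mpr ⟨hMherm, fun x => ?_⟩
    have : star x ⬝ᵥ M *ᵥ x = star (∑ q, v q * x q) * (∑ q, v q * x q) := by
      simp only [dotProduct, mulVec, hMdef, vecMulVec_apply, dotProduct, Pi.star_apply,
        star_sum, star_mul', hvstar]
      rw [Finset.sum_mul]
      apply Finset.sum_congr rfl; intro p _
      rw [Finset.mul_sum, Finset.mul_sum]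
      apply Finset.sum_congr rfl; intro q _
      ring
    rw [this]
    exact star_mul_self_nonneg _
  have smul_psd : ∀ (c : ℝ), 0 ≤ c → ∀ (A : Matrix (Fin d × Fin d) (Fin d × Fin d) ℂ),
      A.PosSemidef → ((c:ℂ) • A).PosSemidef := by
    intro c hc A hA
    have hherm : ((c:ℂ) • A).IsHermitian := by
      unfold Matrix.IsHermitian
      rw [conjTranspose_smul, hA.1.eq, Complex.star_def, Complex.conj_ofReal]
    refine posSemidef_iff_dotProduct_mulVec.mpr ⟨hherm, fun x => ?_⟩
    rw [smul_mulVec, dotProduct_smul, smul_eq_mul]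
    exact mul_nonneg (Complex.zero_le_real.mpr hc) (hA.dotProduct_mulVec_nonneg x)
  set uR : ℝ := (sR - tR) / d with hudef
  have hu0 : 0 ≤ uR := by apply div_nonneg _ hd0.le; linarith
  set S : Matrix (Fin d × Fin d) (Fin d × Fin d) ℂ := (uR:ℂ) • M + (tR:ℂ) • 1 with hSdef
  have hSpsd : S.PosSemidef := (smul_psd uR hu0 M hMpsd).add (smul_psd tR ht0 1 .one)
  have hρeq : ρ = ((1 / ((n:ℂ) * d)) • M) + ((((n:ℂ) - 1) / ((n:ℂ) * (d:ℂ)^2)) • 1) := by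
    ext ⟨a, b⟩ ⟨c, e⟩
    rw [hρdef a b c e]
    simp only [Matrix.add_apply, Matrix.smul_apply, hMdef, vecMulVec_apply, hv, one_apply, smul_eq_mul]
    ring
  have key1 : ((uR:ℂ))^2 * d + 2 * uR * tR = 1 / ((n:ℂ) * d) := by
    have hr : uR^2 * d + 2 * uR * tR = 1 / ((n:ℝ) * d) := by
      have h1 : uR^2 * d + 2 * uR * tR = (sR^2 - tR^2) / d := by
        rw [hudef]; field_simp; ring
      rw [h1, hs2, ht2]
      rw [div_sub_div_same]
      have h2 : (d:ℝ)^2 + (n:ℝ) - 1 - ((n:ℝ) - 1) = (d:ℝ)^2 := by ring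
      rw [h2]
      field_simp
    calc ((uR:ℂ))^2 * d + 2 * uR * tR = ((uR^2 * d + 2 * uR * tR : ℝ) : ℂ) := by
          push_cast; ring
      _ = ((1 / ((n:ℝ) * d) : ℝ) : ℂ) := by rw [hr]
      _ = 1 / ((n:ℂ) * d) := by push_cast; ring
  have key2 : ((tR:ℂ))^2 = ((n:ℂ) - 1) / ((n:ℂ) * (d:ℂ)^2) := by
    calc ((tR:ℂ))^2 = ((tR^2 : ℝ) : ℂ) := by push_cast; ring
      _ = _ := by rw [ht2]; push_cast; ring
  have hSsq : S ^ 2 = ρ := by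
    rw [hρeq, hSdef, pow_two]
    rw [add_mul, mul_add, mul_add, smul_mul_smul_comm, smul_mul_smul_comm,
      smul_mul_smul_comm, smul_mul_smul_comm, hMM, Matrix.mul_one, Matrix.one_mul,
      Matrix.one_mul, smul_smul]
    rw [← key1, ← key2]
    module
  have hρpsd : ρ.PosSemidef := by
    rw [← hSsq]
    exact hSpsd.pow 2
  refine ⟨hρpsd, fun hρ => ?_⟩
  have hsqrt : hρ.sqrt = S := by
    have e1 : hρ.sqrt = cfc Real.sqrt ρ := by
      rw [hρ.1.cfc_eq Real.sqrt]; rfl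
    rw [e1, ← hSsq, ← cfc_comp_pow Real.sqrt 2 S Real.continuous_sqrt.continuousOn hSpsd.1.isSelfAdjoint]
    conv_rhs => rw [← cfc_id' ℝ S hSpsd.1.isSelfAdjoint]
    apply cfc_congr
    intro x hx
    obtain ⟨i, rfl⟩ := hSpsd.1.spectrum_real_eq_range_eigenvalues ▸ hx
    exact Real.sqrt_sq (hSpsd.eigenvalues_nonneg i)
  rw [hsqrt, hSdef]
  have htrM : M.trace = (d:ℂ) := by
    simp only [trace, diag_apply, hMdef, vecMulVec_apply]
    rw [Finset.sum_congr rfl (fun r _ => hvsq r), hsumv]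
  have htr1 : (1 : Matrix (Fin d × Fin d) (Fin d × Fin d) ℂ).trace = ((d:ℂ))^2 := by
    rw [trace_one]
    simp [sq]
  rw [trace_add, trace_smul, trace_smul, htrM, htr1]
  have hud : (uR : ℂ) * d = (sR : ℂ) - tR := by
    rw [hudef]; push_cast
    field_simp
  rw [smul_eq_mul, smul_eq_mul, hud]
  push_cast
  ring
end
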